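/- Let (M,L,∂) be a crossed module, Π a group, and let (B, ϱ) and (B', ϱ') be two (M → L)-extensions of Π by M, with set-theoretic sections u : Π → B of σ and u' : Π → B' of σ' satisfying u(1) = 1, u'(1) = 1, and associated pairs (f, φ) and (f', φ'). Then the two extensions are weakly congruent if and only if there exist a map t : Π → M and an element τ ∈ L such that for all x, y ∈ Π: f'(x,y) = t(x·y)⁻¹·(^τ f(x,y))·t(x)·^(φ'(x))t(y) and φ(x) = τ⁻¹·∂(t(x))·φ'(x)·τ. -/

import Mathlib

/-- Two `(M → L)`-extensions are weakly congruent iff their associated cocycle pairs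
`(f, φ)` and `(f', φ')` differ by a function `t : Q → M` and an element `τ ∈ L`
as indicated (Proposition 8(2)). -/
theorem statement3
    {M L B B' Q : Type} [Group M] [Group L] [Group B] [Group B'] [Group Q]
    (pd : M →* L) (ρ : L →* MulAut M)
    -- crossed module axioms
    (hpeif1 : ∀ (x : L) (m : M), pd (ρ x m) = x * pd m * x⁻¹)
    (hpeif2 : ∀ (n m : M), ρ (pd n) m = n * m * n⁻¹)
    -- first extension
    (κ : M →* B) (σ : B →* Q) (ϱ : B →* L)
    (hκinj : Function.Injective κ) (hσsurj : Function.Surjective σ)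
    (hexact : ∀ b : B, σ b = 1 ↔ b ∈ κ.range)
    (hϱκ : ∀ m : M, ϱ (κ m) = pd m)
    (hconj : ∀ (b : B) (m : M), b * κ m * b⁻¹ = κ (ρ (ϱ b) m))
    -- second extension
    (κ' : M →* B') (σ' : B' →* Q) (ϱ' : B' →* L)
    (hκinj' : Function.Injective κ') (hσsurj' : Function.Surjective σ')
    (hexact' : ∀ b : B', σ' b = 1 ↔ b ∈ κ'.range)
    (hϱκ' : ∀ m : M, ϱ' (κ' m) = pd m)
    (hconj' : ∀ (b : B') (m : M), b * κ' m * b⁻¹ = κ' (ρ (ϱ' b) m))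
    -- sections and associated pairs
    (u : Q → B) (hu : ∀ x : Q, σ (u x) = x) (hu1 : u 1 = 1)
    (u' : Q → B') (hu' : ∀ x : Q, σ' (u' x) = x) (hu1' : u' 1 = 1)
    (φ : Q → L) (hφ : ∀ x : Q, φ x = ϱ (u x))
    (f : Q → Q → M) (hf : ∀ x y : Q, κ (f x y) = u (x * y) * (u y)⁻¹ * (u x)⁻¹)
    (φ' : Q → L) (hφ' : ∀ x : Q, φ' x = ϱ' (u' x))
    (f' : Q → Q → M) (hf' : ∀ x y : Q, κ' (f' x y) = u' (x * y) * (u' y)⁻¹ * (u' x)⁻¹) :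
    -- weak congruence iff the cocycle relation holds
    (∃ (α : B ≃* B') (τ : L), (∀ m : M, α (κ m) = κ' (ρ τ m)) ∧
      (∀ b : B, σ' (α b) = σ b) ∧ (∀ b : B, τ⁻¹ * ϱ' (α b) * τ = ϱ b)) ↔
    (∃ (t : Q → M) (τ : L), ∀ x y : Q,
      f' x y = (t (x * y))⁻¹ * ρ τ (f x y) * t x * ρ (φ' x) (t y) ∧
      φ x = τ⁻¹ * pd (t x) * φ' x * τ) := by
  -- helper facts about ρ
  have hρmul : ∀ (a b : L) (m : M), ρ (a * b) m = ρ a (ρ b m) := by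
    intro a b m; rw [map_mul]; rfl
  have hρone : ∀ m : M, ρ (1 : L) m = m := by
    intro m; rw [map_one]; rfl
  constructor
  · rintro ⟨α, τ, hακ, hσα, hϱα⟩
    have hex : ∀ x : Q, ∃ m : M, κ' m = α (u x) * (u' x)⁻¹ := by
      intro x
      have h1 : σ' (α (u x) * (u' x)⁻¹) = 1 := by
        rw [map_mul, map_inv, hσα, hu, hu', mul_inv_cancel]
      obtain ⟨m, hm⟩ := (hexact' _).mp h1
      exact ⟨m, hm⟩
    choose t ht using hex
    refine ⟨t, τ, fun x y => ⟨?_, ?_⟩⟩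
    · apply hκinj'
      have hρτf : κ' (ρ τ (f x y)) = α (u (x*y)) * (α (u y))⁻¹ * (α (u x))⁻¹ := by
        rw [← hακ, hf, map_mul, map_mul, map_inv, map_inv]
      have hconjy : κ' (ρ (φ' x) (t y)) = u' x * κ' (t y) * (u' x)⁻¹ := by
        rw [hφ' x, ← hconj']
      rw [hf', map_mul, map_mul, map_mul, map_inv, hρτf, hconjy, ht, ht, ht]
      group
    · have h1 : pd (t x) = ϱ' (α (u x)) * (φ' x)⁻¹ := by
        rw [← hϱκ', ht, map_mul, map_inv, hφ']
      have h2 : τ⁻¹ * ϱ' (α (u x)) * τ = ϱ (u x) := hϱα (u x)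
      rw [hφ, h1, ← h2]
      group
  · rintro ⟨t, τ, hty⟩
    have hcoc : ∀ x y : Q, f' x y = (t (x * y))⁻¹ * ρ τ (f x y) * t x * ρ (φ' x) (t y) :=
      fun x y => (hty x y).1
    have hφt : ∀ x : Q, φ x = τ⁻¹ * pd (t x) * φ' x * τ := fun x => (hty x x).2
    have hf11 : f 1 1 = (1 : M) := by
      apply hκinj; rw [hf, one_mul, hu1, map_one]; group
    have hf'11 : f' 1 1 = (1 : M) := by
      apply hκinj'; rw [hf', one_mul, hu1', map_one]; group
    have hφ'1 : φ' 1 = (1 : L) := by rw [hφ', hu1', map_one]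
    have ht1 : t 1 = 1 := by
      have h := hcoc 1 1
      rw [hf11, hf'11, hφ'1, one_mul, map_one, hρone] at h
      group at h
      rw [h]
    obtain ⟨w, hwdef⟩ : ∃ w : Q → B', ∀ x, w x = κ' (t x) * u' x :=
      ⟨fun x => κ' (t x) * u' x, fun _ => rfl⟩
    have hσw : ∀ x : Q, σ' (w x) = x := by
      intro x
      have h0 : σ' (κ' (t x)) = 1 := (hexact' _).mpr ⟨t x, rfl⟩
      rw [hwdef, map_mul, h0, hu', one_mul]
    have hw1 : w 1 = 1 := by rw [hwdef, ht1, map_one, hu1', one_mul]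
    have hϱw : ∀ x : Q, ϱ' (w x) = τ * φ x * τ⁻¹ := by
      intro x
      rw [hwdef, map_mul, hϱκ', ← hφ', hφt x]; group
    have hwconj : ∀ (x : Q) (n : M), w x * κ' n = κ' (ρ τ (ρ (φ x) (ρ τ⁻¹ n))) * w x := by
      intro x n
      have h := hconj' (w x) n
      rw [hϱw] at h
      rw [← hρmul τ (φ x), ← hρmul, ← h]; group
    have huu' : ∀ x y : Q, u' x * u' y = (κ' (f' x y))⁻¹ * u' (x * y) := by
      intro x y; rw [hf']; group
    have hwmul : ∀ x y : Q, w x * w y = (κ' (ρ τ (f x y)))⁻¹ * w (x * y) := by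
      intro x y
      have hc : u' x * κ' (t y) = κ' (ρ (φ' x) (t y)) * u' x := by
        have h := hconj' (u' x) (t y); rw [← hφ'] at h; rw [← h]; group
      calc w x * w y = κ' (t x) * (u' x * κ' (t y)) * u' y := by rw [hwdef, hwdef]; group
        _ = κ' (t x) * κ' (ρ (φ' x) (t y)) * (u' x * u' y) := by rw [hc]; group
        _ = κ' (t x) * κ' (ρ (φ' x) (t y)) * (κ' (f' x y))⁻¹ * u' (x * y) := by
            rw [huu']; group
        _ = (κ' (ρ τ (f x y)))⁻¹ * w (x * y) := by
            have h : t x * ρ (φ' x) (t y) * (f' x y)⁻¹ = (ρ τ (f x y))⁻¹ * t (x * y) := by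
              rw [hcoc x y]; group
            have h2 := congrArg κ' h
            simp only [map_mul, map_inv] at h2
            rw [hwdef, ← mul_assoc, h2]
    have hexm : ∀ b : B, ∃ m : M, κ m = b * (u (σ b))⁻¹ := by
      intro b
      have h1 : σ (b * (u (σ b))⁻¹) = 1 := by
        rw [map_mul, map_inv, hu, mul_inv_cancel]
      obtain ⟨m, hm⟩ := (hexact _).mp h1
      exact ⟨m, hm⟩
    choose mf hmf using hexm
    have hb : ∀ b : B, b = κ (mf b) * u (σ b) := by
      intro b; rw [hmf]; group
    have hσκ : ∀ n : M, σ (κ n) = 1 := fun n => (hexact _).mpr ⟨n, rfl⟩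
    have hmfκ : ∀ n : M, mf (κ n) = n := by
      intro n
      apply hκinj
      rw [hmf, hσκ, hu1]; group
    obtain ⟨F, hFdef⟩ : ∃ F : B → B', ∀ b, F b = κ' (ρ τ (mf b)) * w (σ b) :=
      ⟨fun b => κ' (ρ τ (mf b)) * w (σ b), fun _ => rfl⟩
    have hFκ : ∀ n : M, F (κ n) = κ' (ρ τ n) := by
      intro n; rw [hFdef, hmfκ, hσκ, hw1, mul_one]
    have hσF : ∀ b : B, σ' (F b) = σ b := by
      intro b
      have h0 : σ' (κ' (ρ τ (mf b))) = 1 := (hexact' _).mpr ⟨_, rfl⟩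
      rw [hFdef, map_mul, h0, hσw, one_mul]
    have hFmul : ∀ b c : B, F (b * c) = F b * F c := by
      intro b c
      have h1 : u (σ b) * u (σ c) = (κ (f (σ b) (σ c)))⁻¹ * u (σ b * σ c) := by
        rw [hf]; group
      have h2 : u (σ b) * κ (mf c) = κ (ρ (φ (σ b)) (mf c)) * u (σ b) := by
        have h := hconj (u (σ b)) (mf c); rw [← hφ] at h; rw [← h]; group
      have key : b * c = κ (mf b * ρ (φ (σ b)) (mf c) * (f (σ b) (σ c))⁻¹) * u (σ b * σ c) := by
        rw [map_mul, map_mul, map_inv]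
        calc b * c = κ (mf b) * (u (σ b) * κ (mf c)) * u (σ c) := by
              conv_lhs => rw [hb b, hb c]
              group
          _ = κ (mf b) * κ (ρ (φ (σ b)) (mf c)) * (u (σ b) * u (σ c)) := by rw [h2]; group
          _ = κ (mf b) * κ (ρ (φ (σ b)) (mf c)) * (κ (f (σ b) (σ c)))⁻¹ * u (σ b * σ c) := by
              rw [h1]; group
      have hmbc : mf (b * c) = mf b * ρ (φ (σ b)) (mf c) * (f (σ b) (σ c))⁻¹ := by
        apply hκinj
        rw [hmf, map_mul σ, key]; group
      have h3 : w (σ b) * κ' (ρ τ (mf c)) = κ' (ρ τ (ρ (φ (σ b)) (mf c))) * w (σ b) := by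
        have h := hwconj (σ b) (ρ τ (mf c))
        rw [← hρmul τ⁻¹ τ (mf c), inv_mul_cancel, hρone] at h
        exact h
      rw [hFdef (b * c), hFdef b, hFdef c, hmbc, map_mul σ]
      calc κ' (ρ τ (mf b * ρ (φ (σ b)) (mf c) * (f (σ b) (σ c))⁻¹)) * w (σ b * σ c)
          = κ' (ρ τ (mf b)) * κ' (ρ τ (ρ (φ (σ b)) (mf c))) * ((κ' (ρ τ (f (σ b) (σ c))))⁻¹ * w (σ b * σ c)) := by
            simp only [map_mul, map_inv]; group
        _ = κ' (ρ τ (mf b)) * κ' (ρ τ (ρ (φ (σ b)) (mf c))) * (w (σ b) * w (σ c)) := by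
            rw [hwmul]
        _ = κ' (ρ τ (mf b)) * (w (σ b) * κ' (ρ τ (mf c))) * w (σ c) := by
            rw [h3]; group
        _ = κ' (ρ τ (mf b)) * w (σ b) * (κ' (ρ τ (mf c)) * w (σ c)) := by group
    let Fhom : B →* B' := MonoidHom.mk' F hFmul
    have hFinj : Function.Injective Fhom := by
      rw [injective_iff_map_eq_one]
      intro b hb1
      have hFb : F b = 1 := hb1
      have hσb : σ b = 1 := by rw [← hσF b, hFb, map_one]
      rw [hFdef, hσb, hw1, mul_one] at hFb
      have h4 : ρ τ (mf b) = 1 := hκinj' (by rw [hFb, map_one])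
      have h5 : mf b = 1 := by
        have h := congrArg (ρ τ⁻¹) h4
        rw [← hρmul, inv_mul_cancel, hρone, map_one] at h
        rw [h]
      calc b = κ (mf b) * u (σ b) := hb b
        _ = 1 := by rw [h5, hσb, hu1, map_one, mul_one]
    have hFsurj : Function.Surjective Fhom := by
      intro b'
      have h1 : σ' (b' * (w (σ' b'))⁻¹) = 1 := by
        rw [map_mul, map_inv, hσw, mul_inv_cancel]
      obtain ⟨n, hn⟩ := (hexact' _).mp h1
      refine ⟨κ (ρ τ⁻¹ n) * u (σ' b'), ?_⟩
      have hσ2 : σ (κ (ρ τ⁻¹ n) * u (σ' b')) = σ' b' := by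
        rw [map_mul, hσκ, hu, one_mul]
      have hmf2 : mf (κ (ρ τ⁻¹ n) * u (σ' b')) = ρ τ⁻¹ n := by
        apply hκinj
        rw [hmf, hσ2]; group
      show F _ = b'
      rw [hFdef, hσ2, hmf2, ← hρmul, mul_inv_cancel, hρone, hn]
      group
    refine ⟨MulEquiv.ofBijective Fhom ⟨hFinj, hFsurj⟩, τ, ?_, ?_, ?_⟩
    · intro m
      exact hFκ m
    · intro b
      exact hσF b
    · intro b
      show τ⁻¹ * ϱ' (F b) * τ = ϱ b
      rw [hFdef, map_mul, hϱw, hϱκ', hpeif1]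
      conv_rhs => rw [hb b]
      rw [map_mul, hϱκ, hφ]
      group
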